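/- With f = f̄ − f̲ as above and g the Lovász subgradient at x ∈ [0,1]^n, for every z ∈ [0,1]^n we have g^⊤ z ≤ (1/α) (f̄)_C(z) + β (−f̲)_C(z), where (·)_C denotes the convex closure. -/

import Mathlib

/-- The chain `A_i = {π(1),…,π(i)}` induced by a sorting permutation `π`. -/
def lovaszChain (n : ℕ) (π : Equiv.Perm (Fin n)) (i : ℕ) : Finset (Fin n) :=
  Finset.univ.filter (fun a : Fin n => ((π.symm a : ℕ)) < i)

/-- Convex closure `f_C(z) = sup { g̃^⊤ z + ρ : g̃(A) + ρ ≤ f(A) for all A }`. -/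
noncomputable def convexClosure (n : ℕ) (f : Finset (Fin n) → ℝ) (z : Fin n → ℝ) : ℝ :=
  sSup {r : ℝ | ∃ (g : Fin n → ℝ) (ρ : ℝ),
    (∀ A : Finset (Fin n), (∑ i ∈ A, g i) + ρ ≤ f A) ∧ r = (∑ j, g j * z j) + ρ}

lemma lovaszChain_zero (n : ℕ) (π : Equiv.Perm (Fin n)) : lovaszChain n π 0 = ∅ := by
  simp [lovaszChain]

lemma lovaszChain_top (n : ℕ) (π : Equiv.Perm (Fin n)) :
    lovaszChain n π n = Finset.univ := by
  ext a; simp [lovaszChain, (π.symm a).isLt]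

lemma lovaszChain_succ (n : ℕ) (π : Equiv.Perm (Fin n)) (k : Fin n) :
    lovaszChain n π ((k : ℕ) + 1) = insert (π k) (lovaszChain n π (k : ℕ)) := by
  ext a
  simp only [lovaszChain, Finset.mem_filter, Finset.mem_univ, true_and, Finset.mem_insert]
  rw [Nat.lt_succ_iff_lt_or_eq]
  constructor
  · rintro (h | h)
    · exact Or.inr h
    · left
      have : π.symm a = k := Fin.ext h
      rw [← this, Equiv.apply_symm_apply]
  · rintro (h | h)
    · right; rw [h, Equiv.symm_apply_apply]
    · exact Or.inl h

lemma not_mem_lovaszChain (n : ℕ) (π : Equiv.Perm (Fin n)) (k : Fin n) :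
    π k ∉ lovaszChain n π (k : ℕ) := by
  simp [lovaszChain]

/-- Reindex a sum of chain marginals over a set by the permutation. -/
lemma sum_marginals (n : ℕ) (π : Equiv.Perm (Fin n)) (h : Finset (Fin n) → ℝ)
    (A : Finset (Fin n)) :
    (∑ i ∈ A, (h (lovaszChain n π ((π.symm i : ℕ) + 1)) - h (lovaszChain n π (π.symm i : ℕ))))
      = ∑ k : Fin n, (if π k ∈ A then
          h (lovaszChain n π ((k : ℕ) + 1)) - h (lovaszChain n π (k : ℕ)) else 0) := by
  calc (∑ i ∈ A, (h (lovaszChain n π ((π.symm i : ℕ) + 1))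
          - h (lovaszChain n π (π.symm i : ℕ))))
      = ∑ i : Fin n, (if i ∈ A then
          h (lovaszChain n π ((π.symm i : ℕ) + 1)) - h (lovaszChain n π (π.symm i : ℕ))
        else 0) := by
        rw [Finset.sum_ite_mem, Finset.univ_inter]
    _ = ∑ k : Fin n, (if π k ∈ A then
          h (lovaszChain n π ((π.symm (π k) : ℕ) + 1))
            - h (lovaszChain n π (π.symm (π k) : ℕ)) else 0) :=
        (Equiv.sum_comp π _).symm
    _ = _ := by simp only [Equiv.symm_apply_apply]

/-- Telescoping sum of intersected chain marginals. -/
lemma sum_telescope (n : ℕ) (π : Equiv.Perm (Fin n)) (h : Finset (Fin n) → ℝ)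
    (h0 : h ∅ = 0) (A : Finset (Fin n)) :
    (∑ k : Fin n, (h (A ∩ lovaszChain n π ((k : ℕ) + 1)) - h (A ∩ lovaszChain n π (k : ℕ))))
      = h A := by
  rw [Fin.sum_univ_eq_sum_range
    (fun k => h (A ∩ lovaszChain n π (k + 1)) - h (A ∩ lovaszChain n π k)),
    Finset.sum_range_sub (fun m => h (A ∩ lovaszChain n π m)),
    lovaszChain_zero, lovaszChain_top, Finset.inter_univ, Finset.inter_empty, h0, sub_zero]

lemma chain_sum_bound_sub (n : ℕ) (α : ℝ)
    (h : Finset (Fin n) → ℝ) (h0 : h ∅ = 0)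
    (hDR : ∀ A B : Finset (Fin n), A ⊆ B → ∀ i ∉ B,
      h (insert i A) - h A ≥ α * (h (insert i B) - h B))
    (π : Equiv.Perm (Fin n)) (A : Finset (Fin n)) :
    α * (∑ i ∈ A, (h (lovaszChain n π ((π.symm i : ℕ) + 1))
        - h (lovaszChain n π (π.symm i : ℕ)))) ≤ h A := by
  have key : ∀ k : Fin n,
      α * (if π k ∈ A then
          h (lovaszChain n π ((k : ℕ) + 1)) - h (lovaszChain n π (k : ℕ)) else 0)
        ≤ h (A ∩ lovaszChain n π ((k : ℕ) + 1)) - h (A ∩ lovaszChain n π (k : ℕ)) := by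
    intro k
    by_cases hk : π k ∈ A
    · simp only [hk, if_true]
      have hsub : A ∩ lovaszChain n π (k : ℕ) ⊆ lovaszChain n π (k : ℕ) :=
        Finset.inter_subset_right
      have hnm := not_mem_lovaszChain n π k
      have hDR' := hDR (A ∩ lovaszChain n π (k : ℕ)) (lovaszChain n π (k : ℕ)) hsub (π k) hnm
      rw [← lovaszChain_succ] at hDR'
      have hins : insert (π k) (A ∩ lovaszChain n π (k : ℕ))
          = A ∩ lovaszChain n π ((k : ℕ) + 1) := by
        rw [lovaszChain_succ, Finset.inter_insert_of_mem hk]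
      rw [hins] at hDR'
      linarith
    · simp only [hk, if_false, mul_zero]
      have heq : A ∩ lovaszChain n π ((k : ℕ) + 1) = A ∩ lovaszChain n π (k : ℕ) := by
        rw [lovaszChain_succ, Finset.inter_insert_of_notMem hk]
      rw [heq]; simp
  calc α * (∑ i ∈ A, (h (lovaszChain n π ((π.symm i : ℕ) + 1))
          - h (lovaszChain n π (π.symm i : ℕ))))
      = ∑ k : Fin n, α * (if π k ∈ A then
          h (lovaszChain n π ((k : ℕ) + 1)) - h (lovaszChain n π (k : ℕ)) else 0) := by
        rw [sum_marginals, Finset.mul_sum]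
    _ ≤ ∑ k : Fin n, (h (A ∩ lovaszChain n π ((k : ℕ) + 1))
          - h (A ∩ lovaszChain n π (k : ℕ))) :=
        Finset.sum_le_sum (fun k _ => key k)
    _ = h A := sum_telescope n π h h0 A

lemma chain_sum_bound_sup (n : ℕ) (β : ℝ)
    (h : Finset (Fin n) → ℝ) (h0 : h ∅ = 0)
    (hDR : ∀ A B : Finset (Fin n), A ⊆ B → ∀ i ∉ B,
      h (insert i B) - h B ≥ β * (h (insert i A) - h A))
    (π : Equiv.Perm (Fin n)) (A : Finset (Fin n)) :
    β * h A ≤ ∑ i ∈ A, (h (lovaszChain n π ((π.symm i : ℕ) + 1))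
        - h (lovaszChain n π (π.symm i : ℕ))) := by
  have key : ∀ k : Fin n,
      β * (h (A ∩ lovaszChain n π ((k : ℕ) + 1)) - h (A ∩ lovaszChain n π (k : ℕ)))
        ≤ (if π k ∈ A then
          h (lovaszChain n π ((k : ℕ) + 1)) - h (lovaszChain n π (k : ℕ)) else 0) := by
    intro k
    by_cases hk : π k ∈ A
    · simp only [hk, if_true]
      have hsub : A ∩ lovaszChain n π (k : ℕ) ⊆ lovaszChain n π (k : ℕ) :=
        Finset.inter_subset_right
      have hnm := not_mem_lovaszChain n π k
      have hDR' := hDR (A ∩ lovaszChain n π (k : ℕ)) (lovaszChain n π (k : ℕ)) hsub (π k) hnm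
      rw [← lovaszChain_succ] at hDR'
      have hins : insert (π k) (A ∩ lovaszChain n π (k : ℕ))
          = A ∩ lovaszChain n π ((k : ℕ) + 1) := by
        rw [lovaszChain_succ, Finset.inter_insert_of_mem hk]
      rw [hins] at hDR'
      linarith
    · simp only [hk, if_false]
      have heq : A ∩ lovaszChain n π ((k : ℕ) + 1) = A ∩ lovaszChain n π (k : ℕ) := by
        rw [lovaszChain_succ, Finset.inter_insert_of_notMem hk]
      rw [heq]; simp
  calc β * h A
      = ∑ k : Fin n, β * (h (A ∩ lovaszChain n π ((k : ℕ) + 1))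
          - h (A ∩ lovaszChain n π (k : ℕ))) := by
        rw [← Finset.mul_sum, sum_telescope n π h h0 A]
    _ ≤ ∑ k : Fin n, (if π k ∈ A then
          h (lovaszChain n π ((k : ℕ) + 1)) - h (lovaszChain n π (k : ℕ)) else 0) :=
        Finset.sum_le_sum (fun k _ => key k)
    _ = _ := (sum_marginals n π h A).symm

lemma convexClosure_bddAbove (n : ℕ) (h : Finset (Fin n) → ℝ) (z : Fin n → ℝ)
    (hz : ∀ j, z j ∈ Set.Icc (0:ℝ) 1) :
    BddAbove {r : ℝ | ∃ (g : Fin n → ℝ) (ρ : ℝ),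
      (∀ A : Finset (Fin n), (∑ i ∈ A, g i) + ρ ≤ h A) ∧ r = (∑ j, g j * z j) + ρ} := by
  have hne : (Finset.univ.powerset : Finset (Finset (Fin n))).Nonempty :=
    ⟨∅, Finset.mem_powerset.mpr (Finset.empty_subset _)⟩
  refine ⟨Finset.univ.powerset.sup' hne h, ?_⟩
  rintro r ⟨g, ρ, hfeas, rfl⟩
  set Ap : Finset (Fin n) := Finset.univ.filter (fun j => 0 < g j) with hAp
  have hsum : (∑ j, g j * z j) ≤ ∑ j ∈ Ap, g j := by
    rw [← Finset.sum_filter_add_sum_filter_not Finset.univ (fun j => 0 < g j)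
      (fun j => g j * z j)]
    have h1 : (∑ j ∈ Finset.univ.filter (fun j => 0 < g j), g j * z j)
        ≤ ∑ j ∈ Ap, g j := by
      apply Finset.sum_le_sum
      intro j hj
      rw [Finset.mem_filter] at hj
      calc g j * z j ≤ g j * 1 :=
            mul_le_mul_of_nonneg_left (hz j).2 hj.2.le
        _ = g j := mul_one _
    have h2 : (∑ j ∈ Finset.univ.filter (fun j => ¬ 0 < g j), g j * z j) ≤ 0 := by
      apply Finset.sum_nonpos
      intro j hj
      rw [Finset.mem_filter] at hj
      exact mul_nonpos_of_nonpos_of_nonneg (not_lt.mp hj.2) (hz j).1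
    linarith
  have hfeasAp := hfeas Ap
  have hle : h Ap ≤ Finset.univ.powerset.sup' hne h :=
    Finset.le_sup' h (Finset.mem_powerset.mpr (Finset.subset_univ _))
  linarith

lemma le_convexClosure (n : ℕ) (h : Finset (Fin n) → ℝ) (z : Fin n → ℝ)
    (hz : ∀ j, z j ∈ Set.Icc (0:ℝ) 1) (g : Fin n → ℝ)
    (hfeas : ∀ A : Finset (Fin n), (∑ i ∈ A, g i) ≤ h A) :
    (∑ j, g j * z j) ≤ convexClosure n h z := by
  have : (∑ j, g j * z j) + 0 ≤ convexClosure n h z := by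
    apply le_csSup (convexClosure_bddAbove n h z hz)
    exact ⟨g, 0, fun A => by simpa using hfeas A, rfl⟩
  linarith

/-- For `f = f̄ − f̲` as in the weakly DR setting, the Lovász subgradient `g` at `x`
satisfies `g^⊤ z ≤ (1/α)(f̄)_C(z) + β(−f̲)_C(z)` for all `z ∈ [0,1]^n`. -/
theorem subgradient_convex_closure_bound (n : ℕ) (α β : ℝ) (hα : 0 < α) (hβ : 0 < β)
    (fbar fund : Finset (Fin n) → ℝ)
    (hbar0 : fbar ∅ = 0) (hund0 : fund ∅ = 0)
    (hbarmono : ∀ A B : Finset (Fin n), A ⊆ B → fbar A ≤ fbar B)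
    (hundmono : ∀ A B : Finset (Fin n), A ⊆ B → fund A ≤ fund B)
    (hbarDR : ∀ A B : Finset (Fin n), A ⊆ B → ∀ i ∉ B,
      fbar (insert i A) - fbar A ≥ α * (fbar (insert i B) - fbar B))
    (hundDR : ∀ A B : Finset (Fin n), A ⊆ B → ∀ i ∉ B,
      fund (insert i B) - fund B ≥ β * (fund (insert i A) - fund A))
    (f : Finset (Fin n) → ℝ) (hfdef : ∀ S, f S = fbar S - fund S)
    (x : Fin n → ℝ) (hx : ∀ j, x j ∈ Set.Icc (0:ℝ) 1)
    (π : Equiv.Perm (Fin n)) (v : ℕ → ℝ)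
    (hv0 : v 0 = 1) (hvn : v (n+1) = 0)
    (hvx : ∀ k : Fin n, v ((k : ℕ) + 1) = x (π k))
    (hmono : ∀ i j : ℕ, i ≤ j → j ≤ n + 1 → v j ≤ v i)
    (g : Fin n → ℝ)
    (hg : ∀ k : Fin n, g (π k) = f (lovaszChain n π ((k : ℕ) + 1)) - f (lovaszChain n π (k : ℕ))) :
    ∀ z : Fin n → ℝ, (∀ j, z j ∈ Set.Icc (0:ℝ) 1) →
      (∑ j, g j * z j) ≤
        (1/α) * convexClosure n fbar z + β * convexClosure n (fun A => - fund A) z := by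
  intro z hz
  set gbar : Fin n → ℝ := fun j =>
    fbar (lovaszChain n π ((π.symm j : ℕ) + 1)) - fbar (lovaszChain n π (π.symm j : ℕ))
    with hgbar
  set gund : Fin n → ℝ := fun j =>
    fund (lovaszChain n π ((π.symm j : ℕ) + 1)) - fund (lovaszChain n π (π.symm j : ℕ))
    with hgund
  have hsplit : ∀ j, g j = gbar j - gund j := by
    intro j
    have := hg (π.symm j)
    rw [Equiv.apply_symm_apply] at this
    rw [this, hfdef, hfdef, hgbar, hgund]
    ring
  -- Bound 1
  have hfeas1 : ∀ A : Finset (Fin n), (∑ i ∈ A, α * gbar i) ≤ fbar A := by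
    intro A
    rw [← Finset.mul_sum]
    exact chain_sum_bound_sub n α fbar hbar0 hbarDR π A
  have hb1 : α * (∑ j, gbar j * z j) ≤ convexClosure n fbar z := by
    have := le_convexClosure n fbar z hz (fun j => α * gbar j) hfeas1
    calc α * (∑ j, gbar j * z j) = ∑ j, (α * gbar j) * z j := by
          rw [Finset.mul_sum]; congr 1; ext j; ring
      _ ≤ _ := this
  -- Bound 2
  have hfeas2 : ∀ A : Finset (Fin n), (∑ i ∈ A, -gund i / β) ≤ -fund A := by
    intro A
    have h1 : β * fund A ≤ ∑ i ∈ A, gund i :=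
      chain_sum_bound_sup n β fund hund0 hundDR π A
    have : (∑ i ∈ A, -gund i / β) = -(∑ i ∈ A, gund i) / β := by
      rw [← Finset.sum_div, ← Finset.sum_neg_distrib]
    rw [this]
    rw [div_le_iff₀ hβ]
    nlinarith
  have hb2 : -(∑ j, gund j * z j) / β ≤ convexClosure n (fun A => -fund A) z := by
    have hle := le_convexClosure n (fun A => -fund A) z hz (fun j => -gund j / β) hfeas2
    have heq : (∑ j, (-gund j / β) * z j) = -(∑ j, gund j * z j) / β := by
      have h1 : ∀ j : Fin n, (-gund j / β) * z j = -(gund j * z j) / β := fun j => by ring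
      rw [Finset.sum_congr rfl (fun j _ => h1 j), ← Finset.sum_div,
        Finset.sum_neg_distrib]
    rw [← heq]
    exact hle
  have hsum : (∑ j, g j * z j) = (∑ j, gbar j * z j) - (∑ j, gund j * z j) := by
    rw [← Finset.sum_sub_distrib]
    congr 1; ext j; rw [hsplit j]; ring
  rw [hsum]
  have e1 : (∑ j, gbar j * z j) ≤ (1/α) * convexClosure n fbar z := by
    have h := mul_le_mul_of_nonneg_left hb1 (le_of_lt (one_div_pos.mpr hα))
    have heq : (1/α) * (α * (∑ j, gbar j * z j)) = ∑ j, gbar j * z j := by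
      field_simp
    linarith [h, heq]
  have e2 : -(∑ j, gund j * z j) ≤ β * convexClosure n (fun A => -fund A) z := by
    have h := mul_le_mul_of_nonneg_left hb2 (le_of_lt hβ)
    have heq : β * (-(∑ j, gund j * z j) / β) = -(∑ j, gund j * z j) := by
      field_simp
    linarith [h, heq]
  linarith
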